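/- If a set I of d-dimensional items (each with side lengths in (0,1]) can be packed into the unit d-cube without rotation, and g₁,...,g_d are weighting functions, then the set of items {g(i) : i ∈ I}, where g(i) has length g_j(ℓ_j(i)) in dimension j, can also be packed into the unit d-cube without rotation. -/

import Mathlib

/-- A weighting function (dual feasible function). -/
def IsWeighting (g : ℝ → ℝ) : Prop :=
  (∀ x : ℝ, 0 ≤ x → x ≤ 1 → 0 ≤ g x ∧ g x ≤ 1) ∧
  ∀ l : List ℝ, (∀ x ∈ l, 0 ≤ x ∧ x ≤ 1) → l.sum ≤ 1 → (l.map g).sum ≤ 1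

/-- `Packs d n ℓ` : the `n` axis-parallel `d`-dimensional boxes with side
lengths `ℓ i j` can be placed inside the unit `d`-cube with no two boxes
overlapping in a set of positive volume (two boxes don't overlap iff they are
separated in some dimension). -/
def Packs (d n : ℕ) (ℓ : Fin n → Fin d → ℝ) : Prop :=
  ∃ v : Fin n → Fin d → ℝ,
    (∀ i j, 0 ≤ v i j ∧ v i j + ℓ i j ≤ 1) ∧
    ∀ i i', i ≠ i' → ∃ j, v i j + ℓ i j ≤ v i' j ∨ v i' j + ℓ i' j ≤ v i j

/-- One-dimensional step: transform the lengths in a single dimension. -/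
theorem dff_step {n : ℕ} (len v : Fin n → ℝ) (ov : Fin n → Fin n → Prop)
    (g : ℝ → ℝ) (hg : IsWeighting g)
    (hlen : ∀ i, 0 ≤ len i ∧ len i ≤ 1)
    (hv : ∀ i, 0 ≤ v i ∧ v i + len i ≤ 1) :
    ∃ w : Fin n → ℝ,
      (∀ i, 0 ≤ w i ∧ w i + g (len i) ≤ 1) ∧
      (∀ i i', ov i i' → v i + len i ≤ v i' → w i + g (len i) ≤ w i') := by
  set prec : Fin n → Fin n → Prop := fun i i' => ov i i' ∧ v i + len i ≤ v i' with hprecdef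
  have chainSum : ∀ (L : List (Fin n)) (i : Fin n),
      List.Chain' prec (L ++ [i]) → (L.map len).sum ≤ v i := by
    intro L
    induction L using List.reverseRecOn with
    | nil => intro i _; simpa using (hv i).1
    | append_singleton L b IH =>
      intro i hc
      rw [List.append_assoc, List.Chain', List.isChain_append] at hc
      obtain ⟨h1, h2, h3⟩ := hc
      have hbi : prec b i := (List.isChain_cons_cons.mp h2).1
      have hLb : List.Chain' prec (L ++ [b]) := by
        rw [List.Chain', List.isChain_append]
        refine ⟨h1, List.isChain_singleton b, ?_⟩
        intro x hx y hy
        simp at hy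
        subst hy
        exact h3 x hx b (by simp)
      have hIH := IH b hLb
      have : ((L ++ [b]).map len).sum = (L.map len).sum + len b := by simp
      rw [this]
      have := hbi.2
      linarith
  set S : Fin n → Set ℝ := fun i =>
    {s | ∃ L : List (Fin n), List.Chain' prec (L ++ [i]) ∧ s = ((L.map len).map g).sum}
    with hSdef
  have hmem0 : ∀ i, (0:ℝ) ∈ S i := fun i => ⟨[], List.isChain_singleton i, by simp⟩
  have hub : ∀ i, ∀ s ∈ S i, s + g (len i) ≤ 1 := by
    intro i s hs
    obtain ⟨L, hc, rfl⟩ := hs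
    have h2 := hg.2 (len i :: L.map len) ?_ ?_
    · have : ((len i :: L.map len).map g).sum = g (len i) + ((L.map len).map g).sum := by
        simp
      rw [this] at h2
      linarith
    · intro x hx
      rcases List.mem_cons.mp hx with h | h
      · subst h; exact hlen i
      · obtain ⟨a, _, rfl⟩ := List.mem_map.mp h
        exact hlen a
    · have h1 := chainSum L i hc
      have h2 := (hv i).2
      have : (len i :: L.map len).sum = len i + (L.map len).sum := by simp
      rw [this]
      linarith
  have hbdd : ∀ i, BddAbove (S i) := by
    intro i
    refine ⟨1, fun s hs => ?_⟩
    have h1 := hub i s hs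
    have h2 := (hg.1 (len i) (hlen i).1 (hlen i).2).1
    linarith
  refine ⟨fun i => sSup (S i), fun i => ⟨le_csSup (hbdd i) (hmem0 i), ?_⟩, ?_⟩
  · have : sSup (S i) ≤ 1 - g (len i) := by
      refine csSup_le ⟨0, hmem0 i⟩ (fun s hs => ?_)
      have := hub i s hs; linarith
    linarith
  · intro i i' h1 h2
    have key : ∀ s ∈ S i, s + g (len i) ∈ S i' := by
      rintro s ⟨L, hc, rfl⟩
      refine ⟨L ++ [i], ?_, by simp⟩
      rw [List.Chain', List.isChain_append]
      refine ⟨hc, List.isChain_singleton i', ?_⟩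
      intro x hx y hy
      simp at hy
      subst hy
      rw [List.getLast?_concat] at hx
      simp at hx
      subst hx
      exact ⟨h1, h2⟩
    have : sSup (S i) ≤ sSup (S i') - g (len i) := by
      refine csSup_le ⟨0, hmem0 i⟩ (fun s hs => ?_)
      have := le_csSup (hbdd i') (key s hs)
      linarith
    linarith

/-- Fekete–Schepers transformation: applying weighting functions `g j`
coordinatewise to a packable set of items yields a packable set of items. -/
theorem dff_pack (d n : ℕ) (ℓ : Fin n → Fin d → ℝ)
    (hℓ : ∀ i j, 0 < ℓ i j ∧ ℓ i j ≤ 1)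
    (g : Fin d → ℝ → ℝ) (hg : ∀ j, IsWeighting (g j))
    (hpack : Packs d n ℓ) :
    Packs d n (fun i j => g j (ℓ i j)) := by
  set L : ℕ → Fin n → Fin d → ℝ :=
    fun k i j => if (j : ℕ) < k then g j (ℓ i j) else ℓ i j with hLdef
  have main : ∀ k, Packs d n (L k) := by
    intro k
    induction k with
    | zero => simpa [hLdef] using hpack
    | succ k IH =>
      by_cases hk : k < d
      · obtain ⟨v, hvb, hsep⟩ := IH
        have hLk : ∀ i, L k i ⟨k, hk⟩ = ℓ i ⟨k, hk⟩ := by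
          intro i; simp [hLdef]
        have hLk1 : ∀ i, L (k+1) i ⟨k, hk⟩ = g ⟨k, hk⟩ (ℓ i ⟨k, hk⟩) := by
          intro i; simp [hLdef]
        have hLeq : ∀ i (j : Fin d), j ≠ ⟨k, hk⟩ → L (k+1) i j = L k i j := by
          intro i j hj
          have hne : (j : ℕ) ≠ k := fun h => hj (Fin.ext h)
          simp [hLdef, Nat.le_iff_lt_or_eq, hne]
        obtain ⟨w, hwb, hwm⟩ := dff_step (fun i => ℓ i ⟨k, hk⟩) (fun i => v i ⟨k, hk⟩)
          (fun i i' => ∀ j : Fin d, j ≠ ⟨k, hk⟩ →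
            ¬(v i j + L k i j ≤ v i' j ∨ v i' j + L k i' j ≤ v i j))
          (g ⟨k, hk⟩) (hg ⟨k, hk⟩)
          (fun i => ⟨(hℓ i ⟨k, hk⟩).1.le, (hℓ i ⟨k, hk⟩).2⟩)
          (fun i => by have := hvb i ⟨k, hk⟩; rw [hLk i] at this; exact this)
        refine ⟨fun i j => if j = ⟨k, hk⟩ then w i else v i j, ?_, ?_⟩
        · intro i j
          by_cases hj : j = ⟨k, hk⟩
          · subst hj
            simp only [if_pos rfl]
            rw [hLk1 i]
            exact hwb i
          · simp only [if_neg hj]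
            rw [hLeq i j hj]
            exact hvb i j
        · intro i i' hne
          by_cases hex : ∃ j : Fin d, j ≠ ⟨k, hk⟩ ∧
              (v i j + L k i j ≤ v i' j ∨ v i' j + L k i' j ≤ v i j)
          · obtain ⟨j, hj, hs⟩ := hex
            refine ⟨j, ?_⟩
            dsimp only
            rw [if_neg hj, if_neg hj, hLeq i j hj, hLeq i' j hj]
            exact hs
          · push_neg at hex
            have hov : ∀ j : Fin d, j ≠ ⟨k, hk⟩ →
                ¬(v i j + L k i j ≤ v i' j ∨ v i' j + L k i' j ≤ v i j) := by
              intro j hj hcon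
              rcases hcon with h | h
              · exact absurd (hex j hj).1 (not_lt.mpr h)
              · exact absurd (hex j hj).2 (not_lt.mpr h)
            have hov' : ∀ j : Fin d, j ≠ ⟨k, hk⟩ →
                ¬(v i' j + L k i' j ≤ v i j ∨ v i j + L k i j ≤ v i' j) := by
              intro j hj hcon
              exact hov j hj (Or.symm hcon)
            obtain ⟨j, hs⟩ := hsep i i' hne
            have hjk : j = ⟨k, hk⟩ := by
              by_contra h
              exact hov j h hs
            subst hjk
            rw [hLk i, hLk i'] at hs
            refine ⟨⟨k, hk⟩, ?_⟩
            dsimp only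
            rw [if_pos rfl, if_pos rfl, hLk1 i, hLk1 i']
            rcases hs with h | h
            · exact Or.inl (hwm i i' hov h)
            · exact Or.inr (hwm i' i hov' h)
      · have : L (k+1) = L k := by
          funext i j
          have h1 : (j : ℕ) < k := lt_of_lt_of_le j.isLt (Nat.le_of_not_lt hk)
          simp [hLdef, h1, Nat.lt_succ_of_lt h1]
        rw [this]
        exact IH
  have := main d
  have hLd : L d = fun i j => g j (ℓ i j) := by
    funext i j
    simp [hLdef, j.isLt]
  rwa [hLd] at this
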